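/- arXiv:math/9912238 — 3 statements merged into one kernel-verified Lean document; each statement's English description precedes it below -/
import Mathlib

section
/- Let p and q be distinct points of the unit sphere of ℂ², and let M = {p + t • (q − p) : t ∈ ℂ} be the complex affine line through p and q. Then the (metric) diameter of M ∩ {x ∈ ℂ² : ‖x‖ = 1} equals 2 · |⟪q − p, p⟫_ℂ| / ‖q − p‖. -/
local notation "⟪" x ", " y "⟫" => @inner ℂ (EuclideanSpace ℂ (Fin 2)) _ x y

/-- For distinct `p, q ∈ S³ ⊆ ℂ²`, the euclidean diameter of the intersection of the
complex affine line `M(p,q) = {p + t • (q - p) : t ∈ ℂ}` with the unit sphere equals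
`2 |⟪q - p, p⟫_ℂ| / ‖q - p‖`. -/
theorem stmt3 (p q : EuclideanSpace ℂ (Fin 2)) (hp : ‖p‖ = 1) (hq : ‖q‖ = 1)
    (hpq : p ≠ q) :
    Metric.diam
        ({x : EuclideanSpace ℂ (Fin 2) | ∃ t : ℂ, x = p + t • (q - p)} ∩ {x | ‖x‖ = 1})
      = 2 * ‖⟪q - p, p⟫‖ / ‖q - p‖ := by
  set v : EuclideanSpace ℂ (Fin 2) := q - p with hv
  have hv0 : v ≠ 0 := sub_ne_zero.mpr (Ne.symm hpq)
  have hnv : (0:ℝ) < ‖v‖ := norm_pos_iff.mpr hv0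
  set a : ℂ := ⟪v, p⟫ with ha
  set c : ℂ := a / ((‖v‖ : ℂ)^2) with hc
  have hca : ‖c‖ = ‖a‖ / ‖v‖^2 := by
    rw [hc, norm_div]
    simp [abs_of_nonneg hnv.le]
  -- key: membership of p + t • v in the unit sphere
  have key : ∀ t : ℂ, ‖p + t • v‖ = 1 ↔ ‖t + c‖ = ‖c‖ := by
    intro t
    have h1 : ‖p + t • v‖ = 1 ↔ ‖p + t • v‖^2 = 1 := by
      constructor
      · intro h; rw [h]; norm_num
      · intro h; nlinarith [norm_nonneg (p + t • v)]
    have h2 : ‖t + c‖ = ‖c‖ ↔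
        Complex.normSq (t + c) = Complex.normSq c := by
      constructor
      · intro h
        rw [← Complex.sq_norm, ← Complex.sq_norm, h]
      · intro h
        nlinarith [norm_nonneg (t + c), norm_nonneg c,
          Complex.sq_norm (t + c), Complex.sq_norm c]
    rw [h1, h2]
    have hinner : ⟪p, t • v⟫ = t * (starRingEnd ℂ) a := by
      rw [inner_smul_right, ha, ← inner_conj_symm]
    have hsq : ‖p + t • v‖^2
        = 1 + (2 * (t * (starRingEnd ℂ) a).re + Complex.normSq t * ‖v‖^2) := by
      rw [norm_add_sq (𝕜 := ℂ), hinner, hp, norm_smul]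
      have : ‖t‖^2 = Complex.normSq t := by
        rw [Complex.sq_norm]
      simp only [RCLike.re_to_complex]
      rw [mul_pow, this]
      ring
    have hcre : (t * (starRingEnd ℂ) c).re = (t * (starRingEnd ℂ) a).re / ‖v‖^2 := by
      have hcc : (starRingEnd ℂ) c = (starRingEnd ℂ) a / ((‖v‖:ℂ)^2) := by
        rw [hc, map_div₀]
        congr 1
        rw [← Complex.ofReal_pow, Complex.conj_ofReal]
      rw [hcc, mul_div_assoc', ← Complex.ofReal_pow, Complex.div_ofReal_re]
    have hnsq : Complex.normSq (t + c)
        = Complex.normSq c + (Complex.normSq t + 2 * ((t * (starRingEnd ℂ) a).re / ‖v‖^2)) := by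
      rw [Complex.normSq_add, hcre]; ring
    rw [hsq, hnsq]
    have hn2 : (0:ℝ) < ‖v‖^2 := by positivity
    set X := (t * (starRingEnd ℂ) a).re with hX
    have heq : Complex.normSq t + 2 * (X / ‖v‖^2)
        = (2 * X + Complex.normSq t * ‖v‖^2) / ‖v‖^2 := by
      field_simp; ring
    constructor
    · intro h
      have h' : 2 * X + Complex.normSq t * ‖v‖^2 = 0 := by linarith
      have h2' : Complex.normSq t + 2 * (X / ‖v‖ ^ 2) = 0 := by
        rw [heq, h']; simp
      linarith
    · intro h
      have h' : Complex.normSq t + 2 * (X / ‖v‖ ^ 2) = 0 := by linarith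
      rw [heq] at h'
      have h2' : 2 * X + Complex.normSq t * ‖v‖^2 = 0 := by
        rcases div_eq_zero_iff.mp h' with h3 | h3
        · exact h3
        · exact absurd h3 hn2.ne'
      linarith
  have habs : 2 * ‖a‖ / ‖v‖ = 2 * ‖c‖ * ‖v‖ := by
    rw [hca]; field_simp
  rw [habs]
  apply le_antisymm
  · apply Metric.diam_le_of_forall_dist_le (by positivity)
    rintro x ⟨⟨s, rfl⟩, hx⟩ y ⟨⟨t, rfl⟩, hy⟩
    have hs := (key s).mp hx
    have ht := (key t).mp hy
    have hd : dist (p + s • v) (p + t • v) = ‖s - t‖ * ‖v‖ := by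
      rw [dist_eq_norm]
      have : (p + s • v) - (p + t • v) = (s - t) • v := by
        rw [sub_smul]; abel
      rw [this, norm_smul]
    rw [hd]
    have hst : ‖s - t‖ ≤ 2 * ‖c‖ := by
      have : s - t = (s + c) - (t + c) := by ring
      rw [this, sub_eq_add_neg]
      calc ‖(s + c) + -(t + c)‖
          ≤ ‖s + c‖ + ‖-(t + c)‖ := norm_add_le _ _
        _ = ‖c‖ + ‖c‖ := by rw [norm_neg, hs, ht]
        _ = 2 * ‖c‖ := by ring
    exact mul_le_mul_of_nonneg_right hst hnv.le
  · have hb : Bornology.IsBounded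
        ({x : EuclideanSpace ℂ (Fin 2) | ∃ t : ℂ, x = p + t • v} ∩ {x | ‖x‖ = 1}) := by
      apply Metric.isBounded_sphere (x := 0) (r := 1) |>.subset
      rintro x ⟨-, hx⟩
      simpa [mem_sphere_zero_iff_norm] using hx
    have hmem1 : p ∈ ({x : EuclideanSpace ℂ (Fin 2) | ∃ t : ℂ, x = p + t • v} ∩ {x | ‖x‖ = 1}) :=
      ⟨⟨0, by simp⟩, hp⟩
    have hmem2 : p + (-(2*c)) • v ∈
        ({x : EuclideanSpace ℂ (Fin 2) | ∃ t : ℂ, x = p + t • v} ∩ {x | ‖x‖ = 1}) := by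
      refine ⟨⟨_, rfl⟩, (key _).mpr ?_⟩
      have : -(2*c) + c = -c := by ring
      rw [this, norm_neg]
    have hd := Metric.dist_le_diam_of_mem hb hmem1 hmem2
    have : dist p (p + (-(2*c)) • v) = 2 * ‖c‖ * ‖v‖ := by
      rw [dist_eq_norm]
      have h : p - (p + (-(2*c)) • v) = (2*c) • v := by
        rw [neg_smul]; abel
      rw [h, norm_smul, norm_mul, Complex.norm_two]
    linarith [this ▸ hd]
end

section
/- Let γ : ℝ → ℂ² be a continuously differentiable map such that γ(s + 1) = γ(s) for all s, γ is injective on the interval [0, 1), ‖γ(s)‖ = 1 for all s, γ′(s) ≠ 0 for all s, and ⟪γ(s), γ′(s)⟫_ℂ = 0 for all s (γ is a Legendrian knot parametrization). Then for every ε > 0 there exists δ > 0 such that for all s, t ∈ ℝ, if ‖γ(s) − γ(t)‖ < δ then Metric.diam((affine ℂ-span of {γ(s), γ(t)}) ∩ {x ∈ ℂ² : ‖x‖ = 1}) < ε. -/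
local notation "⟪" x ", " y "⟫" => @inner ℂ (EuclideanSpace ℂ (Fin 2)) _ x y

abbrev E2 := EuclideanSpace ℂ (Fin 2)

-- coefficient bound
lemma coeff_bound (p w : E2) (z : ℂ) (hp : ‖p‖ = 1) (hx : ‖z • w + p‖ = 1) :
    ‖z‖ * ‖w‖ ^ 2 ≤ 2 * ‖⟪p, w⟫‖ := by
  have h := norm_add_sq (𝕜 := ℂ) (z • w) p
  rw [hx, hp] at h
  have h2 : ‖z • w‖ ^ 2 + 2 * RCLike.re ⟪z • w, p⟫ = 0 := by push_cast at h ⊢; nlinarith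
  have h3 : ‖z‖ ^ 2 * ‖w‖ ^ 2 ≤ 2 * ‖⟪z • w, p⟫‖ := by
    have hre := RCLike.norm_re_le_norm (K := ℂ) ⟪z • w, p⟫
    rw [Real.norm_eq_abs] at hre
    have hn : ‖z • w‖ = ‖z‖ * ‖w‖ := norm_smul z w
    have hn2 : ‖z • w‖ ^ 2 = ‖z‖ ^ 2 * ‖w‖ ^ 2 := by rw [hn]; ring
    linarith [neg_abs_le (RCLike.re ⟪z • w, p⟫ : ℝ)]
  have h4 : ‖⟪z • w, p⟫‖ = ‖z‖ * ‖⟪p, w⟫‖ := by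
    rw [inner_smul_left]
    rw [norm_mul, RCLike.norm_conj, ← norm_inner_symm]
  rw [h4] at h3
  rcases eq_or_lt_of_le (norm_nonneg z) with hz | hz
  · rw [← hz, zero_mul]; positivity
  · nlinarith

lemma diam_inter_le (p q : E2) (hp : ‖p‖ = 1) (hq : q ≠ p) :
    Metric.diam ((affineSpan ℂ ({p, q} : Set E2) : Set E2) ∩ {x | ‖x‖ = 1})
      ≤ 4 * ‖⟪p, q - p⟫‖ / ‖q - p‖ := by
  set w : E2 := q - p with hw
  have hw0 : ‖w‖ ≠ 0 := by simpa [hw, sub_eq_zero] using hq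
  have hwpos : 0 < ‖w‖ := lt_of_le_of_ne (norm_nonneg w) (Ne.symm hw0)
  apply Metric.diam_le_of_forall_dist_le (by positivity)
  rintro x ⟨hxl, hxs⟩ y ⟨hyl, hys⟩
  -- extract coefficients
  have hmem : ∀ u : E2, u ∈ (affineSpan ℂ ({p, q} : Set E2) : Set E2) →
      ∃ z : ℂ, u = z • w + p := by
    intro u hu
    have hd : u -ᵥ p ∈ (affineSpan ℂ ({p, q} : Set E2)).direction :=
      AffineSubspace.vsub_mem_direction hu (left_mem_affineSpan_pair ℂ p q)
    rw [direction_affineSpan, mem_vectorSpan_pair_rev] at hd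
    obtain ⟨z, hz⟩ := hd
    refine ⟨z, ?_⟩
    have := hz.symm
    rw [vsub_eq_sub, sub_eq_iff_eq_add] at this
    simpa [hw] using this
  obtain ⟨a, ha⟩ := hmem x hxl
  obtain ⟨b, hb⟩ := hmem y hyl
  have hax : ‖a • w + p‖ = 1 := by rw [← ha]; exact hxs
  have hbx : ‖b • w + p‖ = 1 := by rw [← hb]; exact hys
  have h1 := coeff_bound p w a hp hax
  have h2 := coeff_bound p w b hp hbx
  have hd : dist x y = ‖a - b‖ * ‖w‖ := by
    rw [dist_eq_norm, ha, hb]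
    have : a • w + p - (b • w + p) = (a - b) • w := by
      rw [sub_smul]; abel
    rw [this, norm_smul]
  rw [hd, le_div_iff₀ hwpos]
  have hab : ‖a - b‖ ≤ ‖a‖ + ‖b‖ := norm_sub_le a b
  have hww : (0:ℝ) < ‖w‖ ^ 2 := by positivity
  nlinarith [norm_nonneg (a - b), norm_nonneg w]

lemma inner_est (p q : E2) (hp : ‖p‖ = 1) (hq : ‖q‖ = 1) :
    ‖⟪p, q - p⟫‖ ≤ ‖q - p‖ ^ 2 / 2 + |(⟪p, q⟫).im| := by
  have h1 : ⟪p, q - p⟫ = ⟪p, q⟫ - 1 := by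
    rw [inner_sub_right]
    have : ⟪p, p⟫ = (1 : ℂ) := by
      rw [inner_self_eq_norm_sq_to_K, hp]; norm_num
    rw [this]
  have h2 : ‖q - p‖ ^ 2 = 1 - 2 * RCLike.re ⟪q, p⟫ + 1 := by
    have := norm_sub_sq (𝕜 := ℂ) q p
    rw [hq, hp] at this; simpa using this
  have hre : (⟪p, q⟫).re = RCLike.re ⟪q, p⟫ := by
    show (⟪p, q⟫).re = (⟪q, p⟫).re; rw [← Complex.conj_re, inner_conj_symm]
  have h3 : (⟪p, q⟫ - 1).re = -(‖q - p‖ ^ 2) / 2 := by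
    simp only [Complex.sub_re, Complex.one_re, hre]; linarith
  have h4 := Complex.norm_le_abs_re_add_abs_im (⟪p, q⟫ - 1)
  rw [h1]
  have : ‖⟪p, q⟫ - 1‖ = ‖⟪p, q⟫ - 1‖ := rfl
  rw [this]
  have h5 : |(⟪p, q⟫ - 1).re| = ‖q - p‖ ^ 2 / 2 := by
    rw [h3, abs_div]; simp [abs_of_nonneg (sq_nonneg ‖q - p‖)]
  have h6 : (⟪p, q⟫ - 1).im = (⟪p, q⟫).im := by simp
  rw [h5, h6] at h4
  exact h4

lemma periodic_unif (f : ℝ → E2) (hc : Continuous f) (hp : Function.Periodic f 1) :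
    ∀ η > 0, ∃ r > 0, ∀ s u : ℝ, |u - s| ≤ r → ‖f u - f s‖ ≤ η := by
  intro η hη
  have hK : IsCompact (Set.Icc (-1 : ℝ) 2) := isCompact_Icc
  have huc : UniformContinuousOn f (Set.Icc (-1 : ℝ) 2) :=
    hK.uniformContinuousOn_of_continuous hc.continuousOn
  rw [Metric.uniformContinuousOn_iff] at huc
  obtain ⟨δ, hδ, hδ'⟩ := huc η hη
  refine ⟨min (δ / 2) (1 / 2), by positivity, fun s u h => ?_⟩
  set n : ℤ := ⌊s⌋ with hn
  have hs' : s - n ∈ Set.Icc (-1 : ℝ) 2 := by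
    constructor
    · linarith [Int.sub_floor_div_mul_nonneg s one_pos, Int.fract_nonneg s,
        Int.floor_le s]
    · have := Int.lt_floor_add_one s
      push_cast at this ⊢
      linarith [Int.floor_le s]
  have hu' : u - n ∈ Set.Icc (-1 : ℝ) 2 := by
    have h1 : |u - s| ≤ 1 / 2 := le_trans h (min_le_right _ _)
    rw [abs_le] at h1
    have h2 := Int.floor_le s
    have h3 := Int.lt_floor_add_one s
    constructor <;> [linarith; linarith]
  have hfs : f (s - n) = f s := by
    have := hp.sub_zsmul_eq (x := s) n
    simpa using this
  have hfu : f (u - n) = f u := by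
    have := hp.sub_zsmul_eq (x := u) n
    simpa using this
  have hdist : dist (u - (n : ℝ)) (s - n) < δ := by
    rw [Real.dist_eq]
    have : u - (n : ℝ) - (s - n) = u - s := by ring
    rw [this]
    calc |u - s| ≤ min (δ / 2) (1 / 2) := h
    _ ≤ δ / 2 := min_le_left _ _
    _ < δ := by linarith
  have := hδ' (u - n) hu' (s - n) hs' hdist
  rw [hfu, hfs, dist_eq_norm] at this
  exact this.le

lemma abs_sub_le_of_uIcc {s t u : ℝ} (h : u ∈ Set.uIcc s t) : |u - s| ≤ |t - s| := by
  rw [Set.mem_uIcc] at h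
  rw [abs_le]
  rcases h with ⟨h1, h2⟩ | ⟨h1, h2⟩ <;>
    constructor <;> cases abs_cases (t - s) <;> linarith [le_abs_self (t - s), neg_abs_le (t - s)]

-- Lipschitz bound
lemma gamma_lip (γ : ℝ → E2) (hC1 : ContDiff ℝ 1 γ) (M : ℝ) (hM : ∀ u, ‖deriv γ u‖ ≤ M) (s t : ℝ) :
    ‖γ t - γ s‖ ≤ M * |t - s| := by
  have := convex_univ (𝕜 := ℝ) (E := ℝ) |>.norm_image_sub_le_of_norm_deriv_le
    (f := γ) (C := M) (fun x _ => (hC1.differentiable one_ne_zero).differentiableAt)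
    (fun x _ => hM x) (Set.mem_univ s) (Set.mem_univ t)
  simpa [Real.norm_eq_abs] using this

-- chord-arc lower bound
lemma chord_arc (γ : ℝ → E2) (hC1 : ContDiff ℝ 1 γ) (m r : ℝ) (hm : ∀ u, m ≤ ‖deriv γ u‖)
    (hr : ∀ s u : ℝ, |u - s| ≤ r → ‖deriv γ u - deriv γ s‖ ≤ m / 2)
    (s t : ℝ) (hst : |t - s| ≤ r) :
    m / 2 * |t - s| ≤ ‖γ t - γ s‖ := by
  set g : ℝ → E2 := fun u => γ u - u • deriv γ s with hg
  have hder : ∀ u : ℝ, HasDerivAt g (deriv γ u - deriv γ s) u := by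
    intro u
    have h := ((hasDerivAt_id u).smul_const (deriv γ s))
    simp only [one_smul, id] at h
    exact ((hC1.differentiable one_ne_zero u).hasDerivAt).sub h
  have hbound : ∀ u ∈ Set.uIcc s t, ‖deriv γ u - deriv γ s‖ ≤ m / 2 := by
    intro u hu
    exact hr s u (le_trans (abs_sub_le_of_uIcc hu) hst)
  have key : ‖g t - g s‖ ≤ m / 2 * ‖t - s‖ := by
    refine Convex.norm_image_sub_le_of_norm_hasDerivWithin_le
      (f := g) (f' := fun u => deriv γ u - deriv γ s)
      (fun u _ => (hder u).hasDerivWithinAt) hbound (convex_uIcc s t)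
      Set.left_mem_uIcc Set.right_mem_uIcc
  have hgts : g t - g s = γ t - γ s - (t - s) • deriv γ s := by
    simp only [hg, sub_smul]; abel
  have h2 : ‖(t - s) • deriv γ s‖ ≤ m / 2 * |t - s| + ‖γ t - γ s‖ := by
    rw [hgts] at key
    have := norm_sub_norm_le (γ t - γ s - (t - s) • deriv γ s) (γ t - γ s)
    rw [Real.norm_eq_abs] at key
    have h3 : γ t - γ s - (t - s) • deriv γ s - (γ t - γ s) = -((t - s) • deriv γ s) := by abel
    calc ‖(t - s) • deriv γ s‖ ≤ ‖γ t - γ s - (t - s) • deriv γ s‖ + ‖γ t - γ s‖ := by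
          have := norm_sub_le (γ t - γ s - (t - s) • deriv γ s) (γ t - γ s)
          rw [h3, norm_neg] at this
          linarith [norm_sub_le ((t - s) • deriv γ s) (γ t - γ s - (t - s) • deriv γ s),
            norm_sub_rev (γ t - γ s - (t - s) • deriv γ s) ((t - s) • deriv γ s)]
        _ ≤ m / 2 * |t - s| + ‖γ t - γ s‖ := by linarith
  have h4 : ‖(t - s) • deriv γ s‖ = |t - s| * ‖deriv γ s‖ := by
    rw [norm_smul, Real.norm_eq_abs]
  have h5 : m * |t - s| ≤ |t - s| * ‖deriv γ s‖ := by
    have := hm s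
    nlinarith [abs_nonneg (t - s)]
  linarith

lemma im_bound (γ : ℝ → E2) (hC1 : ContDiff ℝ 1 γ)
    (hleg : ∀ u, ⟪γ u, deriv γ u⟫ = 0) (M : ℝ) (hM : ∀ u, ‖deriv γ u‖ ≤ M)
    (hMlip : ∀ a b : ℝ, ‖γ b - γ a‖ ≤ M * |b - a|) (hM0 : 0 ≤ M) (s t : ℝ) :
    |(⟪γ s, γ t⟫).im| ≤ M ^ 2 * (t - s) ^ 2 := by
  set g : ℝ → ℝ := fun u => (⟪γ s, γ u⟫).im with hgdef
  have hgs : g s = 0 := by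
    simp only [hgdef]
    exact inner_self_im (𝕜 := ℂ) (γ s)
  have hder : ∀ u : ℝ, HasDerivAt g ((⟪γ s, deriv γ u⟫).im) u := by
    intro u
    have hγ := (hC1.differentiable one_ne_zero u).hasDerivAt
    have h1 : HasDerivAt (fun u => ⟪γ s, γ u⟫) ⟪γ s, deriv γ u⟫ u := by
      have := ((innerSL ℂ (γ s)).restrictScalars ℝ).hasFDerivAt.comp_hasDerivAt u hγ
      exact this
    exact Complex.imCLM.hasFDerivAt.comp_hasDerivAt u h1
  have hbound : ∀ u ∈ Set.uIcc s t, ‖(⟪γ s, deriv γ u⟫).im‖ ≤ M ^ 2 * |t - s| := by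
    intro u hu
    have he : ⟪γ s, deriv γ u⟫ = ⟪γ s - γ u, deriv γ u⟫ := by
      rw [inner_sub_left, hleg u, sub_zero]
    rw [Real.norm_eq_abs, he]
    calc |(⟪γ s - γ u, deriv γ u⟫).im| ≤ ‖⟪γ s - γ u, deriv γ u⟫‖ :=
          Complex.abs_im_le_norm _
      _ ≤ ‖γ s - γ u‖ * ‖deriv γ u‖ := norm_inner_le_norm _ _
      _ ≤ (M * |s - u|) * M := by
          have h3 := hMlip u s
          have h4 := hM u
          have h5 : (0:ℝ) ≤ ‖γ s - γ u‖ := norm_nonneg _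
          nlinarith [norm_nonneg (deriv γ u), mul_nonneg hM0 (abs_nonneg (s - u))]
      _ ≤ M ^ 2 * |t - s| := by
          have h6 : |s - u| ≤ |t - s| := by
            rw [abs_sub_comm]; exact abs_sub_le_of_uIcc hu
          nlinarith
  have key : ‖g t - g s‖ ≤ M ^ 2 * |t - s| * ‖t - s‖ :=
    Convex.norm_image_sub_le_of_norm_hasDerivWithin_le
      (f' := fun u => (⟪γ s, deriv γ u⟫).im)
      (fun u _ => (hder u).hasDerivWithinAt) hbound (convex_uIcc s t)
      Set.left_mem_uIcc Set.right_mem_uIcc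
  rw [hgs, sub_zero, Real.norm_eq_abs, Real.norm_eq_abs] at key
  calc |(⟪γ s, γ t⟫).im| = |g t| := rfl
    _ ≤ M ^ 2 * |t - s| * |t - s| := key
    _ = M ^ 2 * (t - s) ^ 2 := by rw [mul_assoc, ← abs_mul, ← sq, abs_of_nonneg (sq_nonneg _)]

lemma chord_close (γ : ℝ → E2) (hcont : Continuous γ) (hper : ∀ s, γ (s + 1) = γ s)
    (hinj : Set.InjOn γ (Set.Ico (0:ℝ) 1)) (r : ℝ) (hr0 : 0 < r) (hr2 : r ≤ 1/2) :
    ∃ δ > 0, ∀ s t : ℝ, ‖γ s - γ t‖ < δ → ∃ n : ℤ, |s - (t + n)| ≤ r := by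
  have hp : Function.Periodic γ 1 := hper
  have hshift : ∀ (x : ℝ) (k : ℤ), γ (x - k) = γ x := by
    intro x k
    have := hp.sub_zsmul_eq (x := x) k
    simpa using this
  have hfract : ∀ x : ℝ, γ (Int.fract x) = γ x := by
    intro x
    have := hshift x ⌊x⌋
    rwa [Int.self_sub_floor] at this
  set F : ℝ × ℝ → ℝ := fun p => ‖γ p.1 - γ (p.1 + p.2)‖ with hF
  have hFcont : Continuous F := by
    apply Continuous.norm
    exact (hcont.comp continuous_fst).sub (hcont.comp (continuous_fst.add continuous_snd))
  have hCcomp : IsCompact (Set.Icc (0:ℝ) 1 ×ˢ Set.Icc r (1 - r)) :=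
    isCompact_Icc.prod isCompact_Icc
  have hCne : (Set.Icc (0:ℝ) 1 ×ˢ Set.Icc r (1 - r)).Nonempty := by
    refine ⟨(0, r), ?_⟩
    constructor
    · constructor <;> norm_num
    · constructor
      · exact le_refl r
      · linarith
  obtain ⟨p0, hp0, hmin⟩ := hCcomp.exists_isMinOn hCne hFcont.continuousOn
  have hδpos : 0 < F p0 := by
    rcases lt_or_eq_of_le (norm_nonneg (γ p0.1 - γ (p0.1 + p0.2))) with h | h
    · exact h
    · exfalso
      have heq : γ p0.1 = γ (p0.1 + p0.2) := by
        have : ‖γ p0.1 - γ (p0.1 + p0.2)‖ = 0 := h.symm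
        rwa [norm_sub_eq_zero_iff] at this
      obtain ⟨⟨ha0, ha1⟩, ⟨hu0, hu1⟩⟩ := hp0
      set a := p0.1; set u := p0.2
      have hmem1 : Int.fract a ∈ Set.Ico (0:ℝ) 1 := ⟨Int.fract_nonneg a, Int.fract_lt_one a⟩
      have hmem2 : Int.fract (a + u) ∈ Set.Ico (0:ℝ) 1 :=
        ⟨Int.fract_nonneg _, Int.fract_lt_one _⟩
      have heq2 : γ (Int.fract a) = γ (Int.fract (a + u)) := by
        rw [hfract, hfract]; exact heq
      have hfeq := hinj hmem1 hmem2 heq2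
      have : u = (⌊a + u⌋ : ℝ) - ⌊a⌋ := by
        have h1 := hfeq
        rw [← Int.self_sub_floor, ← Int.self_sub_floor] at h1
        linarith
      have hk : (0:ℝ) < (⌊a + u⌋ - ⌊a⌋ : ℤ) := by push_cast; linarith
      have hk1 : ((⌊a + u⌋ - ⌊a⌋ : ℤ) : ℝ) < 1 := by push_cast; linarith
      have hge : (1:ℤ) ≤ ⌊a + u⌋ - ⌊a⌋ := by exact_mod_cast hk
      have hge' : ((1:ℤ):ℝ) ≤ ((⌊a + u⌋ - ⌊a⌋ : ℤ) : ℝ) := by exact_mod_cast hge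
      push_cast at hge'
      linarith
  refine ⟨F p0, hδpos, fun s t hst => ?_⟩
  by_contra hcon
  push_neg at hcon
  set v := s - t with hv
  have h1 : r < |v - ⌊v⌋| := by
    have := hcon ⌊v⌋
    calc r < |s - (t + ⌊v⌋)| := this
      _ = |v - ⌊v⌋| := by rw [hv]; ring_nf
  have h2 : r < |v - (⌊v⌋ + 1)| := by
    have := hcon (⌊v⌋ + 1)
    calc r < |s - (t + (⌊v⌋ + 1 : ℤ))| := this
      _ = |v - (⌊v⌋ + 1)| := by rw [hv]; push_cast; ring_nf
  have hfr0 : 0 ≤ Int.fract v := Int.fract_nonneg v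
  have hfr1 : Int.fract v < 1 := Int.fract_lt_one v
  have hu0 : r < Int.fract v := by
    rw [abs_of_nonneg (by rw [Int.self_sub_floor]; exact hfr0 : (0:ℝ) ≤ v - ⌊v⌋)] at h1
    rwa [Int.self_sub_floor] at h1
  have hu1 : Int.fract v < 1 - r := by
    have : v - (⌊v⌋ + 1) = Int.fract v - 1 := by rw [← Int.self_sub_floor]; ring
    rw [this, abs_of_nonpos (by linarith)] at h2
    linarith
  have hmemC : ((Int.fract t, Int.fract v)) ∈ Set.Icc (0:ℝ) 1 ×ˢ Set.Icc r (1 - r) := by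
    constructor
    · exact ⟨Int.fract_nonneg t, (Int.fract_lt_one t).le⟩
    · exact ⟨hu0.le, hu1.le⟩
  have hFval : F (Int.fract t, Int.fract v) = ‖γ s - γ t‖ := by
    simp only [hF]
    have he1 : γ (Int.fract t) = γ t := hfract t
    have he2 : γ (Int.fract t + Int.fract v) = γ s := by
      have : Int.fract t + Int.fract v = s - ((⌊t⌋ + ⌊v⌋ : ℤ) : ℝ) := by
        rw [← Int.self_sub_floor, ← Int.self_sub_floor, hv]; push_cast; ring
      rw [this]
      exact_mod_cast hshift s (⌊t⌋ + ⌊v⌋)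
    rw [he1, he2, norm_sub_rev]
  have := isMinOn_iff.mp hmin _ hmemC
  rw [hFval] at this
  linarith
set_option maxHeartbeats 1000000 in
/-- Let `γ : ℝ → ℂ²` be a `C¹`, 1-periodic parametrization of a Legendrian knot on
the unit sphere: `γ` is injective on `[0,1)`, `‖γ s‖ = 1` everywhere, `γ′ s ≠ 0`
everywhere, and `⟪γ s, γ′ s⟫_ℂ = 0` everywhere. Then for every `ε > 0` there is a
`δ > 0` such that whenever `‖γ s - γ t‖ < δ`, the diameter of the intersection of
the affine ℂ-span of `{γ s, γ t}` with the unit sphere is less than `ε`. -/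
theorem stmt5 (γ : ℝ → EuclideanSpace ℂ (Fin 2))
    (hC1 : ContDiff ℝ 1 γ)
    (hper : ∀ s : ℝ, γ (s + 1) = γ s)
    (hinj : Set.InjOn γ (Set.Ico (0 : ℝ) 1))
    (hsphere : ∀ s, ‖γ s‖ = 1)
    (hreg : ∀ s, deriv γ s ≠ 0)
    (hleg : ∀ s, ⟪γ s, deriv γ s⟫ = 0) :
    ∀ ε > 0, ∃ δ > 0, ∀ s t : ℝ, ‖γ s - γ t‖ < δ →
      Metric.diam
        ((affineSpan ℂ ({γ s, γ t} : Set (EuclideanSpace ℂ (Fin 2))) :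
            Set (EuclideanSpace ℂ (Fin 2))) ∩ {x | ‖x‖ = 1}) < ε := by
  intro ε hε
  have hcont : Continuous γ := hC1.continuous
  have hdcont : Continuous (deriv γ) := hC1.continuous_deriv le_rfl
  have hperP : Function.Periodic γ 1 := hper
  have hdperP : Function.Periodic (deriv γ) 1 := by
    intro s
    have hfun : (fun x => γ (x + 1)) = γ := funext hper
    calc deriv γ (s + 1) = deriv (fun x => γ (x + 1)) s := (deriv_comp_add_const γ 1 s).symm
      _ = deriv γ s := by rw [hfun]
  -- upper bound M on the derivative
  obtain ⟨y1, hy1mem, hy1max⟩ := isCompact_Icc.exists_isMaxOn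
    (Set.nonempty_Icc.mpr zero_le_one) (hdcont.norm.continuousOn (s := Set.Icc (0:ℝ) 1))
  set M : ℝ := max ‖deriv γ y1‖ 1 with hM
  have hM1 : (1:ℝ) ≤ M := le_max_right _ _
  have hM0 : (0:ℝ) ≤ M := by linarith
  have hMb : ∀ u, ‖deriv γ u‖ ≤ M := by
    intro u
    obtain ⟨y, hy, hyeq⟩ := hdperP.exists_mem_Ico₀ one_pos u
    have : ‖deriv γ y‖ ≤ ‖deriv γ y1‖ :=
      isMaxOn_iff.mp hy1max y (Set.Ico_subset_Icc_self hy)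
    rw [hyeq]
    exact le_trans this (le_max_left _ _)
  -- lower bound m on the derivative
  obtain ⟨y0, hy0mem, hy0min⟩ := isCompact_Icc.exists_isMinOn
    (Set.nonempty_Icc.mpr zero_le_one) (hdcont.norm.continuousOn (s := Set.Icc (0:ℝ) 1))
  set m : ℝ := ‖deriv γ y0‖ with hm
  have hm0 : 0 < m := norm_pos_iff.mpr (hreg y0)
  have hmb : ∀ u, m ≤ ‖deriv γ u‖ := by
    intro u
    obtain ⟨y, hy, hyeq⟩ := hdperP.exists_mem_Ico₀ one_pos u
    rw [hyeq]
    exact isMinOn_iff.mp hy0min y (Set.Ico_subset_Icc_self hy)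
  -- uniform continuity radius for deriv γ
  obtain ⟨r0, hr0, hr0p⟩ := periodic_unif (deriv γ) hdcont hdperP (m / 2) (by positivity)
  set r : ℝ := min r0 (1/2) with hrdef
  have hrpos : 0 < r := lt_min hr0 (by norm_num)
  have hr12 : r ≤ 1/2 := min_le_right _ _
  have hrr0 : r ≤ r0 := min_le_left _ _
  have hchordarc : ∀ s t : ℝ, |t - s| ≤ r → m / 2 * |t - s| ≤ ‖γ t - γ s‖ := by
    intro s t hst
    exact chord_arc γ hC1 m r hmb
      (fun a u h => hr0p a u (le_trans h hrr0)) s t hst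
  have hLip : ∀ a b : ℝ, ‖γ b - γ a‖ ≤ M * |b - a| := by
    intro a b
    exact gamma_lip γ hC1 M hMb a b
  obtain ⟨δ1, hδ1, hδ1p⟩ := chord_close γ hcont hper hinj r hrpos hr12
  set C : ℝ := 2 + 16 * M ^ 2 / m ^ 2 with hC
  have hCpos : 0 < C := by positivity
  refine ⟨min δ1 (ε / (2 * C)), lt_min hδ1 (by positivity), fun s t hst => ?_⟩
  have hstδ1 : ‖γ s - γ t‖ < δ1 := lt_of_lt_of_le hst (min_le_left _ _)
  have hstδ2 : ‖γ s - γ t‖ < ε / (2 * C) := lt_of_lt_of_le hst (min_le_right _ _)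
  by_cases hpq : γ t = γ s
  · have hset : ({γ s, γ t} : Set (EuclideanSpace ℂ (Fin 2))) = {γ s} := by
      rw [hpq]; exact Set.pair_eq_singleton _
    rw [hset]
    have hsub : ((affineSpan ℂ ({γ s} : Set (EuclideanSpace ℂ (Fin 2))) :
        Set (EuclideanSpace ℂ (Fin 2))) ∩ {x | ‖x‖ = 1}).Subsingleton := by
      have : (affineSpan ℂ ({γ s} : Set (EuclideanSpace ℂ (Fin 2))) :
          Set (EuclideanSpace ℂ (Fin 2))) = {γ s} := by
        exact AffineSubspace.coe_affineSpan_singleton ℂ _ _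
      rw [this]
      exact Set.subsingleton_singleton.anti Set.inter_subset_left
    rw [Metric.diam_subsingleton hsub]
    exact hε
  · -- nondegenerate case
    set p := γ s with hpdef
    set q := γ t with hqdef
    set d : ℝ := ‖q - p‖ with hd
    have hdpos : 0 < d := by
      rw [hd, norm_pos_iff, sub_ne_zero]
      exact hpq
    have hdst : d = ‖γ s - γ t‖ := norm_sub_rev q p
    -- find integer shift
    obtain ⟨n, hn⟩ := hδ1p s t hstδ1
    set t' : ℝ := t + n with ht'
    have hγt' : γ t' = γ t := by
      have h := hperP.sub_zsmul_eq (x := t + (n:ℝ)) n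
      simp only [zsmul_eq_mul, mul_one, add_sub_cancel_right] at h
      exact h.symm
    have harc : |t' - s| ≤ r := by rw [abs_sub_comm]; exact hn
    have hca := hchordarc s t' harc
    have hγts : ‖γ t' - γ s‖ = d := by rw [hγt', hdst, norm_sub_rev]
    rw [hγts] at hca
    -- imaginary part bound
    have him : |(⟪p, q⟫).im| ≤ 4 * M ^ 2 * d ^ 2 / m ^ 2 := by
      have h1 : (⟪p, q⟫).im = (⟪γ s, γ t'⟫).im := by rw [hγt']
      rw [h1]
      have h2 := im_bound γ hC1 hleg M hMb hLip hM0 s t'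
      have h3 : (t' - s) ^ 2 ≤ 4 * d ^ 2 / m ^ 2 := by
        rw [le_div_iff₀ (by positivity : (0:ℝ) < m ^ 2), ← sq_abs (t' - s)]
        nlinarith [mul_le_mul hca hca (by positivity : (0:ℝ) ≤ m / 2 * |t' - s|) hdpos.le]
      calc |(⟪γ s, γ t'⟫).im| ≤ M ^ 2 * (t' - s) ^ 2 := h2
        _ ≤ M ^ 2 * (4 * d ^ 2 / m ^ 2) := by
            exact mul_le_mul_of_nonneg_left h3 (by positivity)
        _ = 4 * M ^ 2 * d ^ 2 / m ^ 2 := by ring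
    -- inner product estimate
    have hie := inner_est p q (hsphere s) (hsphere t)
    have hdiam := diam_inter_le p q (hsphere s) (fun h => hpq h)
    have hfinal : 4 * ‖⟪p, q - p⟫‖ / ‖q - p‖ ≤ C * d := by
      rw [← hd]
      rw [div_le_iff₀ hdpos]
      have : ‖⟪p, q - p⟫‖ ≤ d ^ 2 / 2 + 4 * M ^ 2 * d ^ 2 / m ^ 2 := by
        calc ‖⟪p, q - p⟫‖ ≤ ‖q - p‖ ^ 2 / 2 + |(⟪p, q⟫).im| := hie
          _ ≤ d ^ 2 / 2 + 4 * M ^ 2 * d ^ 2 / m ^ 2 := by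
            rw [← hd]; linarith
      have hm2 : (0:ℝ) < m ^ 2 := by positivity
      rw [hC]
      have hexp : (2 + 16 * M ^ 2 / m ^ 2) * d * d
          = 4 * (d ^ 2 / 2 + 4 * M ^ 2 * d ^ 2 / m ^ 2) := by
        field_simp; ring
      rw [hexp]
      linarith
    calc Metric.diam _ ≤ 4 * ‖⟪p, q - p⟫‖ / ‖q - p‖ := hdiam
      _ ≤ C * d := hfinal
      _ < C * (ε / (2 * C)) := by
          apply mul_lt_mul_of_pos_left _ hCpos
          rw [hdst]; exact hstδ2
      _ = ε / 2 := by field_simp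
      _ < ε := by linarith
end

section
/- Let L₁, …, L_k be pairwise distinct affine ℝ-lines in ℝ², each meeting the open unit disk {x : ‖x‖ < 1}, such that no two of them intersect at a point of the unit circle {x : ‖x‖ = 1}. Then for every ε > 0 there exist vectors w₁, …, w_k ∈ ℝ² with ‖w_i‖ < ε for all i, such that the translated lines L_i + w_i are pairwise distinct, each meets the open unit disk, no two of them intersect at a point of the unit circle, and no point of ℝ² lies on three (or more) of the lines L_i + w_i (i.e. the translated arrangement is in general position: every node has degree 2). -/
/-- An affine real line in `ℝ²`. -/
def IsRealAffineLine (L : Set (EuclideanSpace ℝ (Fin 2))) : Prop :=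
  ∃ a v : EuclideanSpace ℝ (Fin 2), v ≠ 0 ∧ L = {x | ∃ t : ℝ, x = a + t • v}

namespace Stmt11Aux
open Topology Filter

local notation "E2" => EuclideanSpace ℝ (Fin 2)

def LS (a v : E2) : Set E2 := {x | ∃ t : ℝ, x = a + t • v}

def det2 (v u : E2) : ℝ := v 0 * u 1 - v 1 * u 0

lemma ext2 {x y : E2} (h0 : x 0 = y 0) (h1 : x 1 = y 1) : x = y := by
  ext i; fin_cases i <;> assumption

lemma coord_ne {v : E2} (hv : v ≠ 0) : v 0 ≠ 0 ∨ v 1 ≠ 0 := by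
  by_contra h; push_neg at h
  exact hv (by ext i; fin_cases i <;> simp [h.1, h.2])

lemma indep2 {v u : E2} (hd : det2 v u ≠ 0) {s t : ℝ}
    (h : s • v + t • u = 0) : s = 0 ∧ t = 0 := by
  have h0 : (s • v + t • u) 0 = (0 : E2) 0 := by rw [h]
  have h1 : (s • v + t • u) 1 = (0 : E2) 1 := by rw [h]
  simp only [PiLp.add_apply, PiLp.smul_apply, smul_eq_mul, PiLp.zero_apply] at h0 h1
  unfold det2 at hd
  have hs : s = 0 := by
    have : s * (v 0 * u 1 - v 1 * u 0) = 0 := by linear_combination u 1 * h0 - u 0 * h1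
    exact (mul_eq_zero.1 this).resolve_right hd
  refine ⟨hs, ?_⟩
  have : t * (v 0 * u 1 - v 1 * u 0) = 0 := by linear_combination v 0 * h1 - v 1 * h0
  exact (mul_eq_zero.1 this).resolve_right hd

lemma solve2 {v u : E2} (hd : det2 v u ≠ 0) (b : E2) :
    ∃ s t : ℝ, b = s • v + t • u := by
  unfold det2 at hd
  refine ⟨(b 0 * u 1 - b 1 * u 0) / det2 v u, (v 0 * b 1 - v 1 * b 0) / det2 v u, ?_⟩
  apply ext2 <;>
  · simp only [PiLp.add_apply, PiLp.smul_apply, smul_eq_mul, det2]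
    rw [div_mul_eq_mul_div, div_mul_eq_mul_div, ← add_div, eq_div_iff hd]; ring

lemma det2_left_ne {v u : E2} (hd : det2 v u ≠ 0) : v ≠ 0 := by
  rintro rfl; exact hd (by simp [det2])

lemma parallel_of_det2_eq_zero {v u : E2} (hv : v ≠ 0) (hu : u ≠ 0)
    (hd : det2 v u = 0) : ∃ c : ℝ, c ≠ 0 ∧ u = c • v := by
  unfold det2 at hd
  rcases coord_ne hv with h | h
  · refine ⟨u 0 / v 0, ?_, ?_⟩
    · intro hc
      have h0 : u 0 = 0 := by field_simp at hc; simpa using hc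
      apply hu
      apply ext2
      · simpa using h0
      · simp only [PiLp.zero_apply]
        have : v 0 * u 1 = v 1 * u 0 := by linarith
        rw [h0, mul_zero] at this
        exact (mul_eq_zero.1 this).resolve_left h
    · apply ext2 <;> simp only [PiLp.smul_apply, smul_eq_mul] <;> field_simp
      linarith
  · refine ⟨u 1 / v 1, ?_, ?_⟩
    · intro hc
      have h1 : u 1 = 0 := by field_simp at hc; simpa using hc
      apply hu
      apply ext2
      · simp only [PiLp.zero_apply]
        have : v 0 * u 1 = v 1 * u 0 := by linarith
        rw [h1] at this
        simp at this
        rcases this with h' | h'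
        · exact absurd h' h
        · exact h'
      · simpa using h1
    · apply ext2 <;> simp only [PiLp.smul_apply, smul_eq_mul] <;> field_simp
      linarith

lemma LS_translate (a v w : E2) : (fun x => x + w) '' LS a v = LS (a + w) v := by
  ext x
  constructor
  · rintro ⟨y, ⟨t, rfl⟩, rfl⟩; exact ⟨t, by module⟩
  · rintro ⟨t, rfl⟩; exact ⟨a + t • v, ⟨t, rfl⟩, by module⟩

lemma LS_eq_of_mem {a b v : E2} (h : b ∈ LS a v) : LS b v = LS a v := by
  obtain ⟨t0, rfl⟩ := h
  ext x
  constructor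
  · rintro ⟨t, rfl⟩; exact ⟨t0 + t, by module⟩
  · rintro ⟨t, rfl⟩; exact ⟨t - t0, by module⟩

lemma LS_smul {b v : E2} {c : ℝ} (hc : c ≠ 0) : LS b (c • v) = LS b v := by
  ext x
  constructor
  · rintro ⟨t, rfl⟩; exact ⟨t * c, by module⟩
  · rintro ⟨t, rfl⟩
    exact ⟨t / c, by rw [smul_smul, div_mul_cancel₀ _ hc]⟩

lemma LS_disjoint_of_ne {a b v : E2} (h : LS a v ≠ LS b v) : LS a v ∩ LS b v = ∅ := by
  by_contra hne
  obtain ⟨x, hx1, hx2⟩ := Set.nonempty_iff_ne_empty.2 hne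
  exact h ((LS_eq_of_mem hx1).symm.trans (LS_eq_of_mem hx2))

lemma inter_subsingleton_nonpar {a b v u : E2} (hd : det2 v u ≠ 0) :
    (LS a v ∩ LS b u).Subsingleton := by
  rintro x ⟨⟨t1, rfl⟩, ⟨s1, he1⟩⟩ y ⟨⟨t2, hy⟩, ⟨s2, he2⟩⟩
  subst hy
  have hz : (t1 - t2) • v + (s2 - s1) • u = 0 := by
    have : (t1 - t2) • v + (s2 - s1) • u =
        ((a + t1 • v) - (a + t2 • v)) + ((b + s2 • u) - (b + s1 • u)) := by module
    rw [← he1, ← he2] at this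
    rw [this]; abel
  have := (indep2 hd hz).1
  have ht : t1 = t2 := by linarith
  rw [ht]

lemma inter_nonempty_nonpar {a b v u : E2} (hd : det2 v u ≠ 0) :
    (LS a v ∩ LS b u).Nonempty := by
  obtain ⟨s, t, hst⟩ := solve2 hd (b - a)
  refine ⟨a + s • v, ⟨s, rfl⟩, ⟨-t, ?_⟩⟩
  have : a + s • v - (b + (-t) • u) = (s • v + t • u) - (b - a) := by module
  rw [← hst, sub_self] at this
  exact sub_eq_zero.1 this

lemma LS_ne_nonpar {a b v u : E2} (hd : det2 v u ≠ 0) : LS a v ≠ LS b u := by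
  intro h
  have hv : v ≠ 0 := det2_left_ne hd
  have h1 : a ∈ LS a v ∩ LS b u := ⟨⟨0, by module⟩, h ▸ ⟨0, by module⟩⟩
  have h2 : a + v ∈ LS a v ∩ LS b u := ⟨⟨1, by module⟩, h ▸ ⟨1, by module⟩⟩
  have := inter_subsingleton_nonpar hd h1 h2
  exact hv (by simpa using this)

lemma mem_trans_subsingleton {n v : E2} (hd : det2 n v ≠ 0) (p a : E2) :
    {t : ℝ | p ∈ LS (a + t • n) v}.Subsingleton := by
  rintro t1 ⟨s1, hs1⟩ t2 ⟨s2, hs2⟩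
  have hz : (t1 - t2) • n + (s1 - s2) • v = 0 := by
    have : (t1 - t2) • n + (s1 - s2) • v =
        (a + t1 • n + s1 • v) - (a + t2 • n + s2 • v) := by module
    rw [← hs1, ← hs2, sub_self] at this
    exact this
  have := (indep2 hd hz).1
  linarith

lemma eqline_subsingleton {n v : E2} (hd : det2 n v ≠ 0) (a b : E2) :
    {t : ℝ | LS (a + t • n) v = LS b v}.Subsingleton := by
  apply Set.Subsingleton.anti (mem_trans_subsingleton hd b a)
  intro t ht
  rw [Set.mem_setOf_eq] at ht ⊢
  rw [ht]
  exact ⟨0, by module⟩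

lemma q_spec {v u : E2} (hd : det2 v u ≠ 0) (a b : E2) :
    (a + (((b 0 - a 0) * u 1 - (b 1 - a 1) * u 0) / det2 v u) • v)
      ∈ LS a v ∩ LS b u := by
  constructor
  · exact ⟨_, rfl⟩
  · refine ⟨(v 1 * (b 0 - a 0) - v 0 * (b 1 - a 1)) / det2 v u, ?_⟩
    unfold det2 at hd ⊢
    apply ext2 <;>
    · simp only [PiLp.add_apply, PiLp.smul_apply, smul_eq_mul]
      rw [div_mul_eq_mul_div, div_mul_eq_mul_div, add_div' _ _ _ hd, add_div' _ _ _ hd]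
      congr 1
      ring

lemma inter_subsingleton_of_ne {A B : Set E2} (hA : IsRealAffineLine A)
    (hB : IsRealAffineLine B) (hne : A ≠ B) : (A ∩ B).Subsingleton := by
  obtain ⟨a, v, hv, rfl⟩ := hA
  obtain ⟨b, u, hu, rfl⟩ := hB
  rw [show ({x : E2 | ∃ t : ℝ, x = a + t • v}) = LS a v from rfl,
      show ({x : E2 | ∃ t : ℝ, x = b + t • u}) = LS b u from rfl] at *
  by_cases hd : det2 v u = 0
  · obtain ⟨c, hc, rfl⟩ := parallel_of_det2_eq_zero hv hu hd
    rw [LS_smul hc] at hne ⊢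
    rw [LS_disjoint_of_ne hne]
    exact Set.subsingleton_empty
  · exact inter_subsingleton_nonpar hd

lemma nbInf : (𝓝 (0:ℝ) ⊓ Filter.cofinite).NeBot := by
  rw [Filter.inf_neBot_iff]
  intro s hs t ht
  obtain ⟨δ, hδ, hb⟩ := Metric.mem_nhds_iff.1 hs
  rw [Real.ball_eq_Ioo] at hb
  have hinf : s.Infinite := (Set.Ioo_infinite (by linarith)).mono hb
  have := (hinf.diff (Filter.mem_cofinite.mp ht)).nonempty
  exact this.mono (by intro x hx; exact ⟨hx.1, by simpa using hx.2⟩)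

theorem single (a v : E2) (hv : v ≠ 0) {ι : Type} [Finite ι] (C : ι → Set E2)
    (hC : ∀ j, IsRealAffineLine (C j))
    (hd : ∀ j, LS a v ≠ C j)
    (hb : (LS a v ∩ {x : E2 | ‖x‖ < 1}).Nonempty)
    (hs : ∀ j, LS a v ∩ C j ∩ {x : E2 | ‖x‖ = 1} = ∅)
    (P : Set E2) (hP : P.Finite) (ε : ℝ) (hε : 0 < ε) :
    ∃ w : E2, ‖w‖ < ε ∧ (∀ j, LS (a + w) v ≠ C j) ∧
      ((LS (a + w) v ∩ {x : E2 | ‖x‖ < 1}).Nonempty) ∧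
      (∀ j, LS (a + w) v ∩ C j ∩ {x : E2 | ‖x‖ = 1} = ∅) ∧
      LS (a + w) v ∩ P = ∅ := by
  classical
  set n : E2 := (WithLp.equiv 2 (Fin 2 → ℝ)).symm ![-(v 1), v 0] with hn
  have hn0 : n 0 = -(v 1) := by simp [hn]
  have hn1 : n 1 = v 0 := by simp [hn]
  have hdn : det2 n v ≠ 0 := by
    unfold det2; rw [hn0, hn1]
    rcases coord_ne hv with h | h
    · nlinarith [sq_nonneg (v 0), sq_nonneg (v 1), sq_pos_of_ne_zero h]
    · nlinarith [sq_nonneg (v 0), sq_nonneg (v 1), sq_pos_of_ne_zero h]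
  haveI : (𝓝 (0:ℝ) ⊓ Filter.cofinite).NeBot := nbInf
  set F := 𝓝 (0:ℝ) ⊓ Filter.cofinite with hF
  have Esmall : ∀ᶠ t in F, ‖t • n‖ < ε := by
    apply Filter.Eventually.filter_mono inf_le_left
    have hcont : Continuous fun t : ℝ => ‖t • n‖ := (continuous_id.smul continuous_const).norm
    have := hcont.continuousAt (x := 0) |>.eventually_lt continuousAt_const (by simpa using hε)
    simpa using this
  obtain ⟨x0, hx0L, hx0b⟩ := hb
  have Edisk : ∀ᶠ t in F, ((LS (a + t • n) v ∩ {x : E2 | ‖x‖ < 1}).Nonempty) := by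
    apply Filter.Eventually.filter_mono inf_le_left
    have hcont : Continuous fun t : ℝ => ‖x0 + t • n‖ :=
      (continuous_const.add (continuous_id.smul continuous_const)).norm
    have hev := hcont.continuousAt (x := 0) |>.eventually_lt continuousAt_const
      (by simpa using hx0b)
    filter_upwards [hev] with t ht
    obtain ⟨s, hs0⟩ := hx0L
    exact ⟨x0 + t • n, ⟨s, by rw [hs0]; module⟩, ht⟩
  have EP : ∀ᶠ t in F, LS (a + t • n) v ∩ P = ∅ := by
    apply Filter.Eventually.filter_mono inf_le_right
    have hfin : (⋃ p ∈ P, {t : ℝ | p ∈ LS (a + t • n) v}).Finite :=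
      hP.biUnion (fun p _ => (mem_trans_subsingleton hdn p a).finite)
    filter_upwards [hfin.eventually_cofinite_notMem] with t ht
    rw [Set.eq_empty_iff_forall_notMem]
    rintro x ⟨hx1, hx2⟩
    exact ht (Set.mem_biUnion hx2 hx1)
  have Ej : ∀ j, ∀ᶠ t in F, (LS (a + t • n) v ≠ C j ∧
      LS (a + t • n) v ∩ C j ∩ {x : E2 | ‖x‖ = 1} = ∅) := by
    intro j
    obtain ⟨b, u, hu, hCj⟩ := hC j
    rw [show ({x : E2 | ∃ t : ℝ, x = b + t • u}) = LS b u from rfl] at hCj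
    by_cases hdu : det2 v u = 0
    · obtain ⟨c, hc, rfl⟩ := parallel_of_det2_eq_zero hv hu hdu
      have hCj' : C j = LS b v := by rw [hCj, LS_smul hc]
      apply Filter.Eventually.filter_mono inf_le_right
      have hfin : ({t : ℝ | LS (a + t • n) v = LS b v}).Finite :=
        (eqline_subsingleton hdn a b).finite
      filter_upwards [hfin.eventually_cofinite_notMem] with t ht
      have hne : LS (a + t • n) v ≠ LS b v := ht
      refine ⟨by rw [hCj']; exact hne, ?_⟩
      rw [hCj', LS_disjoint_of_ne hne, Set.empty_inter]
    · set f : ℝ → ℝ := fun t =>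
        ((b 0 - (a 0 + t * n 0)) * u 1 - (b 1 - (a 1 + t * n 1)) * u 0) / det2 v u with hf
      set q : ℝ → E2 := fun t => a + t • n + f t • v with hq
      have hqmem : ∀ t, q t ∈ LS (a + t • n) v ∩ LS b u := by
        intro t
        have h := q_spec hdu (a + t • n) b
        simp only [PiLp.add_apply, PiLp.smul_apply, smul_eq_mul] at h
        exact h
      have hq0 : ‖q 0‖ ≠ 1 := by
        intro h1
        have hmem : q 0 ∈ LS a v ∩ C j ∩ {x : E2 | ‖x‖ = 1} := by
          obtain ⟨⟨s, hs'⟩, h2⟩ := hqmem 0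
          refine ⟨⟨⟨s, by rw [hs']; module⟩, ?_⟩, h1⟩
          rw [hCj]; exact h2
        rw [hs j] at hmem
        exact hmem
      have hfc : Continuous f := by
        apply Continuous.div_const
        fun_prop
      have hqcont : Continuous fun t => ‖q t‖ := by
        apply Continuous.norm
        exact (continuous_const.add (continuous_id.smul continuous_const)).add
          (hfc.smul continuous_const)
      have hev := hqcont.continuousAt (x := 0) |>.eventually_ne hq0
      apply Filter.Eventually.filter_mono inf_le_left
      filter_upwards [hev] with t ht
      refine ⟨by rw [hCj]; exact LS_ne_nonpar hdu, ?_⟩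
      rw [hCj, Set.eq_empty_iff_forall_notMem]
      rintro x ⟨⟨hx1, hx2⟩, hx3⟩
      have hx : x = q t := inter_subsingleton_nonpar hdu ⟨hx1, hx2⟩ (hqmem t)
      rw [Set.mem_setOf_eq] at hx3
      rw [hx] at hx3
      exact ht hx3
  have := (Esmall.and (Edisk.and (EP.and (eventually_all.2 Ej)))).exists
  obtain ⟨t, h1, h2, h3, h4⟩ := this
  exact ⟨t • n, h1, fun j => (h4 j).1, h2, fun j => (h4 j).2, h3⟩

lemma circ_symm {A B S : Set (EuclideanSpace ℝ (Fin 2))} (h : A ∩ B ∩ S = ∅) :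
    B ∩ A ∩ S = ∅ := by rw [Set.inter_comm B A]; exact h

theorem aux : ∀ (k : ℕ), ∀ (m : ℕ) (L : Fin k → Set E2) (M : Fin m → Set E2),
    (∀ p : Fin k ⊕ Fin m, IsRealAffineLine (Sum.elim L M p)) →
    (∀ p q, p ≠ q → Sum.elim L M p ≠ Sum.elim L M q) →
    (∀ p, (Sum.elim L M p ∩ {x : E2 | ‖x‖ < 1}).Nonempty) →
    (∀ p q, p ≠ q → Sum.elim L M p ∩ Sum.elim L M q ∩ {x : E2 | ‖x‖ = 1} = ∅) →
    (∀ (x : E2) (j1 j2 j3 : Fin m), j1 ≠ j2 → j1 ≠ j3 → j2 ≠ j3 →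
      ¬(x ∈ M j1 ∧ x ∈ M j2 ∧ x ∈ M j3)) →
    ∀ ε : ℝ, 0 < ε → ∃ w : Fin k → E2, (∀ i, ‖w i‖ < ε) ∧
      (∀ p q, p ≠ q → Sum.elim (fun i => (fun x => x + w i) '' L i) M p ≠
        Sum.elim (fun i => (fun x => x + w i) '' L i) M q) ∧
      (∀ p, (Sum.elim (fun i => (fun x => x + w i) '' L i) M p ∩ {x : E2 | ‖x‖ < 1}).Nonempty) ∧
      (∀ p q, p ≠ q → Sum.elim (fun i => (fun x => x + w i) '' L i) M p ∩
        Sum.elim (fun i => (fun x => x + w i) '' L i) M q ∩ {x : E2 | ‖x‖ = 1} = ∅) ∧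
      (∀ (x : E2) (p q r : Fin k ⊕ Fin m), p ≠ q → p ≠ r → q ≠ r →
        ¬(x ∈ Sum.elim (fun i => (fun x => x + w i) '' L i) M p ∧
          x ∈ Sum.elim (fun i => (fun x => x + w i) '' L i) M q ∧
          x ∈ Sum.elim (fun i => (fun x => x + w i) '' L i) M r)) := by
  intro k
  induction k with
  | zero =>
    intro m L M hline hdist hball hcirc htri ε hε
    refine ⟨fun _ => 0, fun i => i.elim0, ?_, ?_, ?_, ?_⟩
    · rintro (i | j) (i' | j') hpq
      · exact i.elim0
      · exact i.elim0
      · exact i'.elim0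
      · exact hdist _ _ hpq
    · rintro (i | j)
      · exact i.elim0
      · exact hball (Sum.inr j)
    · rintro (i | j) (i' | j') hpq
      · exact i.elim0
      · exact i.elim0
      · exact i'.elim0
      · exact hcirc _ _ hpq
    · rintro x (i | j1) (q | j2) (r | j3) h1 h2 h3
      · exact i.elim0
      · exact i.elim0
      · exact i.elim0
      · exact i.elim0
      · exact q.elim0
      · exact q.elim0
      · exact r.elim0
      · exact htri x j1 j2 j3 (fun h => h1 (congrArg Sum.inr h))
          (fun h => h2 (congrArg Sum.inr h)) (fun h => h3 (congrArg Sum.inr h))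
  | succ k ih =>
    intro m L M hline hdist hball hcirc htri ε hε
    obtain ⟨a, v, hv, hL0⟩ := hline (Sum.inl 0)
    rw [Sum.elim_inl] at hL0
    rw [show ({x : E2 | ∃ t : ℝ, x = a + t • v}) = LS a v from rfl] at hL0
    -- context family
    have hCline : ∀ p : Fin k ⊕ Fin m,
        IsRealAffineLine (Sum.elim (fun i => L i.succ) M p) := by
      rintro (i | j)
      · exact hline (Sum.inl i.succ)
      · exact hline (Sum.inr j)
    have hCd : ∀ p : Fin k ⊕ Fin m, LS a v ≠ Sum.elim (fun i => L i.succ) M p := by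
      rintro (i | j)
      · rw [← hL0]
        exact hdist (Sum.inl 0) (Sum.inl i.succ)
          (fun h => (Fin.succ_ne_zero i) (Sum.inl_injective h).symm)
      · rw [← hL0]
        exact hdist (Sum.inl 0) (Sum.inr j) Sum.inl_ne_inr
    have hCb : (LS a v ∩ {x : E2 | ‖x‖ < 1}).Nonempty := by
      have := hball (Sum.inl 0); rw [Sum.elim_inl, hL0] at this; exact this
    have hCs : ∀ p : Fin k ⊕ Fin m,
        LS a v ∩ Sum.elim (fun i => L i.succ) M p ∩ {x : E2 | ‖x‖ = 1} = ∅ := by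
      rintro (i | j)
      · rw [← hL0]
        exact hcirc (Sum.inl 0) (Sum.inl i.succ)
          (fun h => (Fin.succ_ne_zero i) (Sum.inl_injective h).symm)
      · rw [← hL0]
        exact hcirc (Sum.inl 0) (Sum.inr j) Sum.inl_ne_inr
    -- finite set of double points of M
    set P : Set E2 := {x | ∃ j1 j2 : Fin m, j1 ≠ j2 ∧ x ∈ M j1 ∧ x ∈ M j2} with hPdef
    have hPfin : P.Finite := by
      have hsub : P ⊆ ⋃ j1 : Fin m, ⋃ j2 : Fin m,
          {x | j1 ≠ j2 ∧ x ∈ M j1 ∧ x ∈ M j2} := by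
        rintro x ⟨j1, j2, h⟩
        exact Set.mem_iUnion.2 ⟨j1, Set.mem_iUnion.2 ⟨j2, h⟩⟩
      refine Set.Finite.subset ?_ hsub
      apply Set.finite_iUnion; intro j1
      apply Set.finite_iUnion; intro j2
      by_cases hj : j1 = j2
      · subst hj
        convert Set.finite_empty
        ext x; simp
      · refine Set.Finite.subset
          ((inter_subsingleton_of_ne (hline (Sum.inr j1)) (hline (Sum.inr j2))
            (hdist (Sum.inr j1) (Sum.inr j2)
              (fun h => hj (Sum.inr_injective h)))).finite) ?_
        rintro x ⟨-, h1, h2⟩; exact ⟨h1, h2⟩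
    obtain ⟨w0, hw0ε, hw0d, hw0b, hw0s, hw0P⟩ :=
      single a v hv (Sum.elim (fun i : Fin k => L i.succ) M) hCline hCd hCb hCs P hPfin ε hε
    -- new context for induction
    set M' : Fin (m + 1) → Set E2 := Fin.cons (LS (a + w0) v) M with hM'
    set L' : Fin k → Set E2 := fun i => L i.succ with hL'
    have hM'0 : M' 0 = LS (a + w0) v := by rw [hM']; simp
    have hM's : ∀ j : Fin m, M' j.succ = M j := by intro j; rw [hM']; simp
    have hline' : ∀ p : Fin k ⊕ Fin (m + 1), IsRealAffineLine (Sum.elim L' M' p) := by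
      rintro (i | j)
      · exact hline (Sum.inl i.succ)
      · cases j using Fin.cases with
        | zero => rw [Sum.elim_inr, hM'0]; exact ⟨a + w0, v, hv, rfl⟩
        | succ j => rw [Sum.elim_inr, hM's]; exact hline (Sum.inr j)
    have hdist' : ∀ p q, p ≠ q → Sum.elim L' M' p ≠ Sum.elim L' M' q := by
      rintro (i | j) (i' | j') hpq
      · exact hdist (Sum.inl i.succ) (Sum.inl i'.succ)
          (fun h => hpq (congrArg Sum.inl (Fin.succ_injective _ (Sum.inl_injective h))))
      · cases j' using Fin.cases with
        | zero =>
          rw [Sum.elim_inl, Sum.elim_inr, hM'0]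
          exact (hw0d (Sum.inl i)).symm
        | succ j' =>
          rw [Sum.elim_inl, Sum.elim_inr, hM's]
          exact hdist (Sum.inl i.succ) (Sum.inr j') Sum.inl_ne_inr
      · cases j using Fin.cases with
        | zero =>
          rw [Sum.elim_inl, Sum.elim_inr, hM'0]
          exact hw0d (Sum.inl i')
        | succ j =>
          rw [Sum.elim_inl, Sum.elim_inr, hM's]
          exact hdist (Sum.inr j) (Sum.inl i'.succ) Sum.inr_ne_inl
      · cases j using Fin.cases with
        | zero =>
          cases j' using Fin.cases with
          | zero => exact absurd rfl hpq
          | succ j' =>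
            rw [Sum.elim_inr, Sum.elim_inr, hM'0, hM's]
            exact hw0d (Sum.inr j')
        | succ j =>
          cases j' using Fin.cases with
          | zero =>
            rw [Sum.elim_inr, Sum.elim_inr, hM'0, hM's]
            exact (hw0d (Sum.inr j)).symm
          | succ j' =>
            rw [Sum.elim_inr, Sum.elim_inr, hM's, hM's]
            exact hdist (Sum.inr j) (Sum.inr j')
              (fun h => hpq (congrArg Sum.inr (congrArg Fin.succ (Sum.inr_injective h))))
    have hball' : ∀ p, (Sum.elim L' M' p ∩ {x : E2 | ‖x‖ < 1}).Nonempty := by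
      rintro (i | j)
      · exact hball (Sum.inl i.succ)
      · cases j using Fin.cases with
        | zero => rw [Sum.elim_inr, hM'0]; exact hw0b
        | succ j => rw [Sum.elim_inr, hM's]; exact hball (Sum.inr j)
    have hcirc' : ∀ p q, p ≠ q →
        Sum.elim L' M' p ∩ Sum.elim L' M' q ∩ {x : E2 | ‖x‖ = 1} = ∅ := by
      rintro (i | j) (i' | j') hpq
      · exact hcirc (Sum.inl i.succ) (Sum.inl i'.succ)
          (fun h => hpq (congrArg Sum.inl (Fin.succ_injective _ (Sum.inl_injective h))))
      · cases j' using Fin.cases with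
        | zero =>
          rw [Sum.elim_inl, Sum.elim_inr, hM'0]
          exact circ_symm (hw0s (Sum.inl i))
        | succ j' =>
          rw [Sum.elim_inl, Sum.elim_inr, hM's]
          exact hcirc (Sum.inl i.succ) (Sum.inr j') Sum.inl_ne_inr
      · cases j using Fin.cases with
        | zero =>
          rw [Sum.elim_inl, Sum.elim_inr, hM'0]
          exact hw0s (Sum.inl i')
        | succ j =>
          rw [Sum.elim_inl, Sum.elim_inr, hM's]
          exact hcirc (Sum.inr j) (Sum.inl i'.succ) Sum.inr_ne_inl
      · cases j using Fin.cases with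
        | zero =>
          cases j' using Fin.cases with
          | zero => exact absurd rfl hpq
          | succ j' =>
            rw [Sum.elim_inr, Sum.elim_inr, hM'0, hM's]
            exact hw0s (Sum.inr j')
        | succ j =>
          cases j' using Fin.cases with
          | zero =>
            rw [Sum.elim_inr, Sum.elim_inr, hM'0, hM's]
            exact circ_symm (hw0s (Sum.inr j))
          | succ j' =>
            rw [Sum.elim_inr, Sum.elim_inr, hM's, hM's]
            exact hcirc (Sum.inr j) (Sum.inr j')
              (fun h => hpq (congrArg Sum.inr (congrArg Fin.succ (Sum.inr_injective h))))
    have htri' : ∀ (x : E2) (j1 j2 j3 : Fin (m + 1)), j1 ≠ j2 → j1 ≠ j3 → j2 ≠ j3 →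
        ¬(x ∈ M' j1 ∧ x ∈ M' j2 ∧ x ∈ M' j3) := by
      intro x j1 j2 j3 h12 h13 h23
      have hP0 : ∀ (y : E2), y ∈ LS (a + w0) v → ∀ (b c : Fin m), b ≠ c →
          y ∈ M b → y ∈ M c → False := by
        intro y hy b c hbc hyb hyc
        exact Set.eq_empty_iff_forall_notMem.1 hw0P y ⟨hy, b, c, hbc, hyb, hyc⟩
      cases j1 using Fin.cases with
      | zero =>
        cases j2 using Fin.cases with
        | zero => exact absurd rfl h12
        | succ j2 =>
          cases j3 using Fin.cases with
          | zero => exact absurd rfl h13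
          | succ j3 =>
            rw [hM'0, hM's, hM's]
            rintro ⟨hx1, hx2, hx3⟩
            exact hP0 x hx1 j2 j3 (fun h => h23 (congrArg Fin.succ h)) hx2 hx3
      | succ j1 =>
        cases j2 using Fin.cases with
        | zero =>
          cases j3 using Fin.cases with
          | zero => exact absurd rfl h23
          | succ j3 =>
            rw [hM'0, hM's, hM's]
            rintro ⟨hx1, hx2, hx3⟩
            exact hP0 x hx2 j1 j3 (fun h => h13 (congrArg Fin.succ h)) hx1 hx3
        | succ j2 =>
          cases j3 using Fin.cases with
          | zero =>
            rw [hM'0, hM's, hM's]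
            rintro ⟨hx1, hx2, hx3⟩
            exact hP0 x hx3 j1 j2 (fun h => h12 (congrArg Fin.succ h)) hx1 hx2
          | succ j3 =>
            rw [hM's, hM's, hM's]
            exact htri x j1 j2 j3
              (fun h => h12 (congrArg Fin.succ h))
              (fun h => h13 (congrArg Fin.succ h))
              (fun h => h23 (congrArg Fin.succ h))
    obtain ⟨w', hw'ε, hd', hb', hs', ht'⟩ :=
      ih (m + 1) L' M' hline' hdist' hball' hcirc' htri' ε hε
    -- index translation
    set κ : Fin (k + 1) ⊕ Fin m → Fin k ⊕ Fin (m + 1) :=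
      Sum.elim (Fin.cases (Sum.inr 0) (fun i => Sum.inl i)) (fun j => Sum.inr j.succ) with hκ
    have hκinl0 : κ (Sum.inl 0) = Sum.inr 0 := by rw [hκ]; simp
    have hκinls : ∀ i : Fin k, κ (Sum.inl i.succ) = Sum.inl i := by intro i; rw [hκ]; simp
    have hκinr : ∀ j : Fin m, κ (Sum.inr j) = Sum.inr j.succ := by intro j; rw [hκ]; simp
    have hκinj : Function.Injective κ := by
      rintro (i | j) (i' | j') h
      · cases i using Fin.cases with
        | zero =>
          cases i' using Fin.cases with
          | zero => rfl
          | succ i' => rw [hκinl0, hκinls] at h; exact absurd h Sum.inr_ne_inl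
        | succ i =>
          cases i' using Fin.cases with
          | zero => rw [hκinl0, hκinls] at h; exact absurd h Sum.inl_ne_inr
          | succ i' =>
            rw [hκinls, hκinls] at h
            rw [Sum.inl_injective h]
      · cases i using Fin.cases with
        | zero =>
          rw [hκinl0, hκinr] at h
          exact absurd (Sum.inr_injective h).symm (Fin.succ_ne_zero j')
        | succ i => rw [hκinls, hκinr] at h; exact absurd h Sum.inl_ne_inr
      · cases i' using Fin.cases with
        | zero =>
          rw [hκinl0, hκinr] at h
          exact absurd (Sum.inr_injective h) (Fin.succ_ne_zero j)
        | succ i' => rw [hκinls, hκinr] at h; exact absurd h.symm Sum.inl_ne_inr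
      · rw [hκinr, hκinr] at h
        rw [Fin.succ_injective _ (Sum.inr_injective h)]
    -- family equality
    have hFeq : ∀ p : Fin (k + 1) ⊕ Fin m,
        Sum.elim (fun i => (fun x => x + (Fin.cons w0 w' : Fin (k+1) → E2) i) '' L i) M p
          = Sum.elim (fun i => (fun x => x + w' i) '' L' i) M' (κ p) := by
      rintro (i | j)
      · cases i using Fin.cases with
        | zero =>
          rw [hκinl0, Sum.elim_inr, hM'0, Sum.elim_inl, Fin.cons_zero, hL0, LS_translate]
        | succ i =>
          rw [hκinls, Sum.elim_inl, Sum.elim_inl, Fin.cons_succ]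
      · rw [hκinr, Sum.elim_inr, Sum.elim_inr, hM's]
    refine ⟨Fin.cons w0 w', ?_, ?_, ?_, ?_, ?_⟩
    · intro i
      cases i using Fin.cases with
      | zero => rw [Fin.cons_zero]; exact hw0ε
      | succ i => rw [Fin.cons_succ]; exact hw'ε i
    · intro p q hpq
      rw [hFeq p, hFeq q]
      exact hd' _ _ (fun h => hpq (hκinj h))
    · intro p
      rw [hFeq p]
      exact hb' _
    · intro p q hpq
      rw [hFeq p, hFeq q]
      exact hs' _ _ (fun h => hpq (hκinj h))
    · intro x p q r h1 h2 h3
      rw [hFeq p, hFeq q, hFeq r]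
      exact ht' x _ _ _ (fun h => h1 (hκinj h)) (fun h => h2 (hκinj h))
        (fun h => h3 (hκinj h))

end Stmt11Aux

/-- Any hyperbolic ℝ-line arrangement (pairwise distinct affine ℝ-lines meeting the
open unit disk, no two of which meet on the unit circle) admits arbitrarily small
translations putting it in general position: the translated lines are pairwise
distinct, each meets the open unit disk, no two meet on the unit circle, and no
point lies on three of them. -/
theorem stmt11 (k : ℕ) (L : Fin k → Set (EuclideanSpace ℝ (Fin 2)))
    (hline : ∀ i, IsRealAffineLine (L i))
    (hdist : ∀ i j, i ≠ j → L i ≠ L j)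
    (hball : ∀ i, (L i ∩ {x | ‖x‖ < 1}).Nonempty)
    (hpar : ∀ i j, i ≠ j → L i ∩ L j ∩ {x | ‖x‖ = 1} = ∅) :
    ∀ ε > 0, ∃ w : Fin k → EuclideanSpace ℝ (Fin 2),
      (∀ i, ‖w i‖ < ε) ∧
      (∀ i j, i ≠ j → (fun x => x + w i) '' L i ≠ (fun x => x + w j) '' L j) ∧
      (∀ i, (((fun x => x + w i) '' L i) ∩ {x | ‖x‖ < 1}).Nonempty) ∧
      (∀ i j, i ≠ j →
        ((fun x => x + w i) '' L i) ∩ ((fun x => x + w j) '' L j) ∩ {x | ‖x‖ = 1} = ∅) ∧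
      (∀ x : EuclideanSpace ℝ (Fin 2), ∀ i j l : Fin k, i ≠ j → i ≠ l → j ≠ l →
        ¬(x ∈ (fun y => y + w i) '' L i ∧ x ∈ (fun y => y + w j) '' L j ∧
          x ∈ (fun y => y + w l) '' L l)) := by
  intro ε hε
  obtain ⟨w, h1, h2, h3, h4, h5⟩ := Stmt11Aux.aux k 0 L (fun j => j.elim0)
    (by rintro (i | j)
        · exact hline i
        · exact j.elim0)
    (by rintro (i | j) (i' | j') h
        · exact hdist i i' (fun e => h (congrArg Sum.inl e))
        · exact j'.elim0
        · exact j.elim0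
        · exact j.elim0)
    (by rintro (i | j)
        · exact hball i
        · exact j.elim0)
    (by rintro (i | j) (i' | j') h
        · exact hpar i i' (fun e => h (congrArg Sum.inl e))
        · exact j'.elim0
        · exact j.elim0
        · exact j.elim0)
    (by intro x j1 j2 j3 _ _ _; exact j1.elim0)
    ε hε
  refine ⟨w, h1, ?_, ?_, ?_, ?_⟩
  · intro i j hij
    exact h2 (Sum.inl i) (Sum.inl j) (fun h => hij (Sum.inl_injective h))
  · intro i
    exact h3 (Sum.inl i)
  · intro i j hij
    exact h4 (Sum.inl i) (Sum.inl j) (fun h => hij (Sum.inl_injective h))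
  · intro x i j l hij hil hjl
    exact h5 x (Sum.inl i) (Sum.inl j) (Sum.inl l)
      (fun h => hij (Sum.inl_injective h)) (fun h => hil (Sum.inl_injective h))
      (fun h => hjl (Sum.inl_injective h))
end
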